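/- arXiv:2208.03076 — 3 statements merged into one kernel-verified Lean document; each statement's English description precedes it below -/
import Mathlib

section
/- Let E be a finite-dimensional real inner product space and K ⊆ E a self-dual closed convex cone (i.e. K = {w ∈ E : ⟨w,y⟩ ≥ 0 for all y ∈ K}). Let g : ℝⁿ → E and h : ℝⁿ → ℝᵖ be continuously differentiable and define Φ(x) = (1/2)(‖h(x)‖² + ‖Π_K(−g(x))‖²). Then Φ is differentiable on ℝⁿ and for every x ∈ ℝⁿ, ∇Φ(x) = Dh(x)ᵀ h(x) − Dg(x)*[Π_K(−g(x))], where Dg(x)*[w] = (⟨∂₁g(x), w⟩, …, ⟨∂ₙg(x), w⟩) is the adjoint of the derivative Dg(x). -/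
/-!
STATEMENT 0: Gradient of the infeasibility measure
Φ(x) = (1/2)(‖h(x)‖² + ‖Π_K(−g(x))‖²), namely
∇Φ(x) = Dh(x)ᵀ h(x) − Dg(x)*[Π_K(−g(x))].
-/

open Filter Topology Set
open scoped InnerProductSpace

-- Metric projection onto a set `K` (the unique nearest point when `K` is a
-- nonempty closed convex subset of a complete inner product space).
open Classical in
noncomputable def projCC {E : Type*} [NormedAddCommGroup E] (K : Set E) (w : E) : E :=
  if h : ∃ p ∈ K, ∀ q ∈ K, ‖w - p‖ ≤ ‖w - q‖ then h.choose else 0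

open InnerProductSpace

section aux
variable {E : Type*} [NormedAddCommGroup E] [InnerProductSpace ℝ E]

lemma projCC_spec {K : Set E} (hne : K.Nonempty) (hc : IsComplete K) (hconv : Convex ℝ K)
    (w : E) : projCC K w ∈ K ∧ ∀ q ∈ K, ‖w - projCC K w‖ ≤ ‖w - q‖ := by
  classical
  have hex : ∃ p ∈ K, ∀ q ∈ K, ‖w - p‖ ≤ ‖w - q‖ := by
    obtain ⟨v, hv, hmin⟩ := exists_norm_eq_iInf_of_complete_convex hne hc hconv w
    haveI : Nonempty K := hne.to_subtype
    refine ⟨v, hv, fun q hq => ?_⟩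
    rw [hmin]
    have hbdd : BddBelow (Set.range fun q : K => ‖w - (q : E)‖) :=
      ⟨0, Set.forall_mem_range.2 fun _ => norm_nonneg _⟩
    exact ciInf_le hbdd ⟨q, hq⟩
  rw [projCC, dif_pos hex]
  exact ⟨hex.choose_spec.1, hex.choose_spec.2⟩

lemma projCC_inner_le {K : Set E} (hne : K.Nonempty) (hc : IsComplete K) (hconv : Convex ℝ K)
    (w : E) : ∀ y ∈ K, ⟪w - projCC K w, y - projCC K w⟫_ℝ ≤ 0 := by
  obtain ⟨hmem, hmin⟩ := projCC_spec hne hc hconv w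
  haveI : Nonempty K := hne.to_subtype
  have heq : ‖w - projCC K w‖ = ⨅ q : K, ‖w - q‖ := by
    refine le_antisymm (le_ciInf fun q => hmin q q.2) ?_
    have hbdd : BddBelow (Set.range fun q : K => ‖w - (q : E)‖) :=
      ⟨0, Set.forall_mem_range.2 fun _ => norm_nonneg _⟩
    exact ciInf_le hbdd ⟨_, hmem⟩
  exact (norm_eq_iInf_iff_real_inner_le_zero hconv hmem).1 heq

end aux

section selfdual
variable {E : Type*} [NormedAddCommGroup E] [InnerProductSpace ℝ E] [FiniteDimensional ℝ E]
variable {K : Set E} (hK : K = {w : E | ∀ y ∈ K, 0 ≤ ⟪w, y⟫_ℝ})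

include hK

lemma sd_zero_mem : (0 : E) ∈ K := by
  rw [hK]; intro y _; simp

lemma sd_nonempty : K.Nonempty := ⟨0, sd_zero_mem hK⟩

lemma sd_convex : Convex ℝ K := by
  rw [hK]
  intro a ha b hb s t hs ht hst
  intro y hy
  have := ha y hy; have := hb y hy
  simp only [inner_add_left, real_inner_smul_left]
  positivity

lemma sd_closed : IsClosed K := by
  have h2 : {w : E | ∀ y ∈ K, 0 ≤ ⟪w, y⟫_ℝ} = ⋂ y ∈ K, {w : E | 0 ≤ ⟪w, y⟫_ℝ} := by
    ext w; simp
  rw [hK, h2]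
  refine isClosed_biInter fun y _ => isClosed_le continuous_const ?_
  exact (continuous_id.inner continuous_const)

lemma sd_complete : IsComplete K := (sd_closed hK).isComplete

lemma sd_smul_mem {c : ℝ} (hcpos : 0 ≤ c) {p : E} (hp : p ∈ K) : c • p ∈ K := by
  rw [hK]; intro y hy
  rw [real_inner_smul_left]
  have : 0 ≤ ⟪p, y⟫_ℝ := by rw [hK] at hp; exact hp y hy
  positivity

lemma sd_proj_orth (w : E) : ⟪w - projCC K w, projCC K w⟫_ℝ = 0 := by
  have hvar := projCC_inner_le (sd_nonempty hK) (sd_complete hK) (sd_convex hK) w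
  have hmem := (projCC_spec (sd_nonempty hK) (sd_complete hK) (sd_convex hK) w).1
  have h1 := hvar ((2 : ℝ) • projCC K w) (sd_smul_mem hK (by norm_num) hmem)
  have h2 := hvar 0 (sd_zero_mem hK)
  have e1 : (2 : ℝ) • projCC K w - projCC K w = projCC K w := by
    rw [two_smul]; abel
  rw [e1] at h1
  rw [zero_sub, inner_neg_right] at h2
  linarith

/-- Gradient of half the squared distance to `K`. -/
lemma hasGradientAt_half_dist_sq (w₀ : E) :
    HasGradientAt (fun u => (1/2 : ℝ) * ‖u - projCC K u‖ ^ 2) (w₀ - projCC K w₀) w₀ := by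
  have hne := sd_nonempty hK; have hc := sd_complete hK; have hconv := sd_convex hK
  set p := projCC K w₀ with hp
  have hpmem := (projCC_spec hne hc hconv w₀).1
  have hvar := projCC_inner_le hne hc hconv w₀
  rw [hasGradientAt_iff_hasFDerivAt, hasFDerivAt_iff_isLittleO_nhds_zero]
  have key : ∀ d : E,
      |(1/2 : ℝ) * ‖w₀ + d - projCC K (w₀ + d)‖ ^ 2 - (1/2) * ‖w₀ - p‖ ^ 2
        - ⟪w₀ - p, d⟫_ℝ| ≤ (1/2) * ‖d‖ ^ 2 := by
    intro d
    set u := w₀ + d with hu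
    set q := projCC K u with hq
    have hqmem := (projCC_spec hne hc hconv u).1
    have hqmin := (projCC_spec hne hc hconv u).2
    have hupper : (1/2 : ℝ) * ‖u - q‖ ^ 2 ≤ (1/2) * ‖u - p‖ ^ 2 := by
      have := hqmin p hpmem
      have h2 : ‖u - q‖ ^ 2 ≤ ‖u - p‖ ^ 2 := by
        exact pow_le_pow_left₀ (norm_nonneg _) this 2
      linarith
    have hexp : ‖u - p‖ ^ 2 = ‖w₀ - p‖ ^ 2 + 2 * ⟪w₀ - p, d⟫_ℝ + ‖d‖ ^ 2 := by
      have : u - p = (w₀ - p) + d := by rw [hu]; abel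
      rw [this, norm_add_sq_real]
    have hlower : (1/2 : ℝ) * ‖w₀ - p‖ ^ 2 + ⟪w₀ - p, d⟫_ℝ ≤ (1/2) * ‖u - q‖ ^ 2 := by
      -- ½‖u−q‖² ≥ ⟪w₀−p, u−q⟫ − ½‖w₀−p‖²
      have hab : ⟪w₀ - p, u - q⟫_ℝ ≤ (1/2) * ‖w₀ - p‖ ^ 2 + (1/2) * ‖u - q‖ ^ 2 := by
        have := real_inner_le_norm (w₀ - p) (u - q)
        nlinarith [norm_nonneg (w₀ - p), norm_nonneg (u - q), sq_nonneg (‖w₀ - p‖ - ‖u - q‖)]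
      have hsplit : ⟪w₀ - p, u - q⟫_ℝ
          = ⟪w₀ - p, d⟫_ℝ + ‖w₀ - p‖ ^ 2 - ⟪w₀ - p, q - p⟫_ℝ := by
        have : u - q = d + (w₀ - p) - (q - p) := by rw [hu]; abel
        rw [this, inner_sub_right, inner_add_right, real_inner_self_eq_norm_sq]
      have hqp : ⟪w₀ - p, q - p⟫_ℝ ≤ 0 := hvar q hqmem
      linarith
    rw [abs_le]
    constructor
    · nlinarith
    · nlinarith
  rw [Asymptotics.isLittleO_iff]
  intro c hc0
  filter_upwards [Metric.ball_mem_nhds (0 : E) (by positivity : (0:ℝ) < 2 * c)] with d hd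
  have hdn : ‖d‖ < 2 * c := by simpa [dist_eq_norm] using hd
  have := key d
  have h1 : ‖(1/2 : ℝ) * ‖w₀ + d - projCC K (w₀ + d)‖ ^ 2 - (1/2) * ‖w₀ - p‖ ^ 2
      - (toDual ℝ E (w₀ - p)) d‖ ≤ (1/2) * ‖d‖ ^ 2 := by
    simpa [Real.norm_eq_abs, toDual_apply_apply, inner_sub_left] using this
  calc ‖(1/2 : ℝ) * ‖w₀ + d - projCC K (w₀ + d)‖ ^ 2 - (1/2) * ‖w₀ - p‖ ^ 2
      - (toDual ℝ E (w₀ - p)) d‖ ≤ (1/2) * ‖d‖ ^ 2 := h1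
    _ ≤ c * ‖d‖ := by nlinarith [norm_nonneg d]

/-- Gradient of half the squared norm of the projection. -/
lemma hasGradientAt_half_proj_sq (w₀ : E) :
    HasGradientAt (fun u => (1/2 : ℝ) * ‖projCC K u‖ ^ 2) (projCC K w₀) w₀ := by
  have hfun : (fun u => (1/2 : ℝ) * ‖projCC K u‖ ^ 2)
      = fun u => (1/2 : ℝ) * ⟪u, u⟫_ℝ - (1/2) * ‖u - projCC K u‖ ^ 2 := by
    funext u
    have horth := sd_proj_orth hK u
    have : ‖u‖ ^ 2 = ‖u - projCC K u‖ ^ 2 + ‖projCC K u‖ ^ 2 := by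
      have hdecomp : u = (u - projCC K u) + projCC K u := by abel
      calc ‖u‖ ^ 2 = ‖(u - projCC K u) + projCC K u‖ ^ 2 := by rw [← hdecomp]
        _ = ‖u - projCC K u‖ ^ 2 + 2 * ⟪u - projCC K u, projCC K u⟫_ℝ + ‖projCC K u‖ ^ 2 :=
            norm_add_sq_real _ _
        _ = ‖u - projCC K u‖ ^ 2 + ‖projCC K u‖ ^ 2 := by rw [horth]; ring
    rw [real_inner_self_eq_norm_sq, this]; ring
  rw [hfun]
  have h1 : HasFDerivAt (fun u : E => (1/2 : ℝ) * ⟪u, u⟫_ℝ) (toDual ℝ E w₀) w₀ := by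
    have := ((hasFDerivAt_id w₀).inner ℝ (hasFDerivAt_id w₀)).const_mul (1/2 : ℝ)
    refine this.congr_fderiv ?_
    ext d
    simp [fderivInnerCLM_apply, real_inner_comm w₀ d, toDual_apply_apply]
    ring
  have h2 := (hasGradientAt_half_dist_sq hK w₀).hasFDerivAt
  rw [hasGradientAt_iff_hasFDerivAt]
  refine (h1.sub h2).congr_fderiv ?_
  rw [← map_sub]
  congr 1
  abel

end selfdual

theorem stmt_0 {n p : ℕ} {E : Type*} [NormedAddCommGroup E] [InnerProductSpace ℝ E]
    [FiniteDimensional ℝ E]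
    (K : Set E)
    -- `K` is a self-dual (hence closed convex) cone:
    (hK : K = {w : E | ∀ y ∈ K, 0 ≤ ⟪w, y⟫_ℝ})
    (g : EuclideanSpace ℝ (Fin n) → E) (h : EuclideanSpace ℝ (Fin n) → EuclideanSpace ℝ (Fin p))
    (hg : ContDiff ℝ 1 g) (hh : ContDiff ℝ 1 h)
    (Φ : EuclideanSpace ℝ (Fin n) → ℝ)
    (hΦ : Φ = fun x => (1 / 2) * (‖h x‖ ^ 2 + ‖projCC K (-(g x))‖ ^ 2)) :
    ∀ x : EuclideanSpace ℝ (Fin n),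
      HasGradientAt Φ
        ((fderiv ℝ h x).adjoint (h x) - (fderiv ℝ g x).adjoint (projCC K (-(g x)))) x := by
  intro x
  have hgd : HasFDerivAt g (fderiv ℝ g x) x :=
    (hg.differentiable one_ne_zero x).hasFDerivAt
  have hhd : HasFDerivAt h (fderiv ℝ h x) x :=
    (hh.differentiable one_ne_zero x).hasFDerivAt
  -- part 1: x ↦ ½‖h x‖²
  have part1 : HasFDerivAt (fun x => (1/2 : ℝ) * ‖h x‖ ^ 2)
      (toDual ℝ (EuclideanSpace ℝ (Fin n)) ((fderiv ℝ h x).adjoint (h x))) x := by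
    have hf : (fun x => (1/2 : ℝ) * ‖h x‖ ^ 2) = fun x => (1/2 : ℝ) * ⟪h x, h x⟫_ℝ := by
      funext y; rw [real_inner_self_eq_norm_sq]
    rw [hf]
    refine ((hhd.inner ℝ hhd).const_mul (1/2 : ℝ)).congr_fderiv ?_
    ext d
    simp only [ContinuousLinearMap.coe_smul', Pi.smul_apply,
      ContinuousLinearMap.coe_comp', Function.comp_apply,
      ContinuousLinearMap.prod_apply, fderivInnerCLM_apply, toDual_apply_apply,
      ContinuousLinearMap.adjoint_inner_left, smul_eq_mul]
    rw [real_inner_comm ((fderiv ℝ h x) d) (h x)]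
    ring
  -- part 2: x ↦ ½‖projCC K (−g x)‖²
  have hneg : HasFDerivAt (fun x => -(g x)) (-(fderiv ℝ g x)) x := hgd.neg
  have hF := (hasGradientAt_half_proj_sq hK (-(g x))).hasFDerivAt
  have part2 : HasFDerivAt (fun x => (1/2 : ℝ) * ‖projCC K (-(g x))‖ ^ 2)
      (toDual ℝ (EuclideanSpace ℝ (Fin n))
        (-(fderiv ℝ g x).adjoint (projCC K (-(g x))))) x := by
    refine (hF.comp x hneg).congr_fderiv ?_
    ext d
    simp [toDual_apply_apply, ContinuousLinearMap.adjoint_inner_left,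
      inner_neg_left, inner_neg_right]
  have hcomb := part1.add part2
  have hfun : Φ = fun x => (1/2 : ℝ) * ‖h x‖ ^ 2 + (1/2 : ℝ) * ‖projCC K (-(g x))‖ ^ 2 := by
    rw [hΦ]; funext y; ring
  rw [hfun, hasGradientAt_iff_hasFDerivAt]
  refine hcomb.congr_fderiv ?_
  rw [← map_add, sub_eq_add_neg]
end

section
/- Let F : ℝⁿ → ℝ be differentiable everywhere with ∇F locally Lipschitz, and define the generalized Hessian ∂²F(x) as the convex hull of the set of all n×n matrices M for which there exists a sequence xᵏ → x of points where ∇F is differentiable and D∇F(xᵏ) → M. If x* is a local minimizer of F, then ∇F(x*) = 0 and for every d ∈ ℝⁿ there exists a matrix M ∈ ∂²F(x*) such that dᵀ M d ≥ 0. -/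
/-!
STATEMENT 1: Second-order necessary condition for unconstrained minimizers of a
differentiable function with locally Lipschitz gradient, in terms of the
generalized (Clarke) Hessian.
-/

open Filter Topology Set
open scoped InnerProductSpace

set_option maxHeartbeats 1000000

open MeasureTheory
open scoped NNReal


/-- The B-subdifferential of a map `F` at `x`: limits of derivatives of `F`
along sequences of differentiability points converging to `x`. -/
def Bsub {X Y : Type*} [NormedAddCommGroup X] [NormedSpace ℝ X]
    [NormedAddCommGroup Y] [NormedSpace ℝ Y] (F : X → Y) (x : X) : Set (X →L[ℝ] Y) :=
  {V | ∃ u : ℕ → X, Tendsto u atTop (𝓝 x) ∧ (∀ k, DifferentiableAt ℝ F (u k)) ∧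
    Tendsto (fun k => fderiv ℝ F (u k)) atTop (𝓝 V)}

/-- The generalized Hessian `∂²F(x)` of a differentiable function `F` is the
convex hull of the set of limiting Hessians, i.e. the Clarke subdifferential of
the gradient map `∇F` at `x`. -/
noncomputable def genHessian {n : ℕ} (F : EuclideanSpace ℝ (Fin n) → ℝ)
    (x : EuclideanSpace ℝ (Fin n)) :
    Set (EuclideanSpace ℝ (Fin n) →L[ℝ] EuclideanSpace ℝ (Fin n)) :=
  convexHull ℝ (Bsub (fun y => gradient F y) x)

section Aux
variable {n : ℕ}
local notation "E" => EuclideanSpace ℝ (Fin n)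

private lemma arith1 (X A a b m ε τ : ℝ) (hm : 0 < m) (h1 : (X - A) * m ≤ a)
    (h2 : b ≤ A * m) (h3 : a - b ≤ -ε * m * τ) : X ≤ 2 * A - ε * τ := by
  have h4 : X * m ≤ (2 * A - ε * τ) * m := by nlinarith
  exact le_of_mul_le_mul_right h4 hm

private lemma arith2 (Kd ρ ε τ : ℝ) (hKd : 0 ≤ Kd) (hρ0 : 0 ≤ ρ)
    (h : ρ ≤ ε * τ / (4 * (Kd + 1))) : 2 * (Kd * ρ) ≤ ε * τ / 2 := by
  have h' : ρ * (4 * (Kd + 1)) ≤ ε * τ := (le_div_iff₀ (by positivity)).1 h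
  nlinarith

lemma phi_integrable (G : E → E) (d xs : E) (K : ℝ≥0) (δ ρ r : ℝ) (hr : 0 < r)
    (hK : LipschitzOnWith K G (Metric.ball xs δ))
    (hgeo : ∀ y ∈ Metric.ball xs ρ, ∀ u : ℝ, |u| ≤ 2 * r → y + u • d ∈ Metric.ball xs δ)
    (u : ℝ) (hu : |u| ≤ 2 * r) :
    Integrable (fun y => ⟪d, G (y + u • d)⟫_ℝ) (volume.restrict (Metric.ball xs ρ)) := by
  set B := Metric.ball xs ρ with hBdef
  have hBmeas : MeasurableSet B := measurableSet_ball
  have hBfin : volume B ≠ ⊤ := measure_ball_lt_top.ne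
  have hGcont : ContinuousOn G (Metric.ball xs δ) := hK.continuousOn
  have key : AEStronglyMeasurable (fun y => ⟪d, G (y + u • d)⟫_ℝ) (volume.restrict B) := by
    apply ContinuousOn.aestronglyMeasurable _ hBmeas
    apply Continuous.comp_continuousOn (continuous_const.inner continuous_id)
    exact hGcont.comp (continuous_id.add continuous_const).continuousOn
      (fun y hy => hgeo y hy u hu)
  haveI : IsFiniteMeasure (volume.restrict B) :=
    ⟨by rw [Measure.restrict_apply_univ]; exact hBfin.lt_top⟩
  apply Integrable.mono' (integrable_const (‖d‖ * ((K : ℝ) * δ + ‖G xs‖))) key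
  filter_upwards [ae_restrict_mem hBmeas] with y hy
  have h1 : ‖G (y + u • d) - G xs‖ ≤ K * dist (y + u • d) xs := by
    rw [← dist_eq_norm]
    exact hK.dist_le_mul _ (hgeo y hy u hu) _ (Metric.mem_ball_self (by
      have := hgeo y hy u hu; exact dist_nonneg.trans_lt (Metric.mem_ball.1 this)))
  calc ‖⟪d, G (y + u • d)⟫_ℝ‖ ≤ ‖d‖ * ‖G (y + u • d)‖ := norm_inner_le_norm _ _
    _ ≤ ‖d‖ * (‖G (y + u • d) - G xs‖ + ‖G xs‖) := by
        gcongr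
        have := norm_sub_norm_le (G (y + u • d)) (G xs); linarith
    _ ≤ ‖d‖ * ((K : ℝ) * δ + ‖G xs‖) := by
        gcongr
        exact h1.trans (by gcongr; · exact (Metric.mem_ball.1 (hgeo y hy u hu)).le)

lemma psi_deriv (G : E → E) (d xs : E) (K : ℝ≥0) (δ ρ r : ℝ) (hr : 0 < r)
    (hK : LipschitzOnWith K G (Metric.ball xs δ))
    (hgeo : ∀ y ∈ Metric.ball xs ρ, ∀ u : ℝ, |u| ≤ 2 * r → y + u • d ∈ Metric.ball xs δ)
    (u₀ : ℝ) (hu₀ : |u₀| ≤ r) :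
    HasDerivAt (fun u => ∫ y in Metric.ball xs ρ, ⟪d, G (y + u • d)⟫_ℝ)
      (∫ y in Metric.ball xs ρ, ⟪d, (fderiv ℝ G (y + u₀ • d)) d⟫_ℝ) u₀ ∧
    Integrable (fun y => ⟪d, (fderiv ℝ G (y + u₀ • d)) d⟫_ℝ)
      (volume.restrict (Metric.ball xs ρ)) := by
  set B := Metric.ball xs ρ with hB
  have hBmeas : MeasurableSet B := measurableSet_ball
  have hGcont : ContinuousOn G (Metric.ball xs δ) := hK.continuousOn
  have key : ∀ u : ℝ, |u| ≤ 2 * r →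
      AEStronglyMeasurable (fun y => ⟪d, G (y + u • d)⟫_ℝ) (volume.restrict B) := by
    intro u hu
    apply ContinuousOn.aestronglyMeasurable _ hBmeas
    apply Continuous.comp_continuousOn (continuous_const.inner continuous_id)
    exact hGcont.comp (continuous_id.add continuous_const).continuousOn
      (fun y hy => hgeo y hy u hu)
  have hae : ∀ᵐ y : E, y ∈ Metric.ball xs δ → DifferentiableAt ℝ G y := by
    filter_upwards [hK.ae_differentiableWithinAt_of_mem] with y hy hmem
    exact (hy hmem).differentiableAt (Metric.isOpen_ball.mem_nhds hmem)
  have haeT : ∀ᵐ y : E, y + u₀ • d ∈ Metric.ball xs δ → DifferentiableAt ℝ G (y + u₀ • d) :=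
    (measurePreserving_add_right volume (u₀ • d)).quasiMeasurePreserving.tendsto_ae.eventually hae
  have main := hasDerivAt_integral_of_dominated_loc_of_lip (μ := volume.restrict B)
    (F := fun u y => ⟪d, G (y + u • d)⟫_ℝ)
    (F' := fun y => ⟪d, (fderiv ℝ G (y + u₀ • d)) d⟫_ℝ)
    (bound := fun _ => (K : ℝ) * ‖d‖ ^ 2) (x₀ := u₀) (s := Metric.ball u₀ r) (Metric.ball_mem_nhds u₀ hr)
    ?_ ?_ ?_ ?_ ?_ ?_
  · exact ⟨main.2, main.1⟩
  · have : ∀ᶠ u in 𝓝 u₀, u ∈ Metric.ball u₀ r := Metric.ball_mem_nhds u₀ hr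
    filter_upwards [this] with u hu
    apply key
    have : |u - u₀| < r := by simpa [Real.dist_eq] using hu
    calc |u| ≤ |u - u₀| + |u₀| := by simpa using abs_add_le (u - u₀) u₀
      _ ≤ 2 * r := by linarith
  · exact phi_integrable G d xs K δ ρ r hr hK hgeo u₀ (by linarith [abs_nonneg u₀, hr])
  · exact ((measurable_const.inner ((measurable_fderiv_apply_const ℝ G d).comp
      (measurable_id.add_const (u₀ • d))))).aestronglyMeasurable
  · filter_upwards [ae_restrict_mem hBmeas] with y hy
    apply LipschitzOnWith.of_dist_le_mul
    intro u₁ h₁ u₂ h₂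
    have hmem : ∀ u : ℝ, u ∈ Metric.ball u₀ r → y + u • d ∈ Metric.ball xs δ := by
      intro u hu
      apply hgeo y hy
      have : |u - u₀| < r := by simpa [Real.dist_eq] using hu
      calc |u| ≤ |u - u₀| + |u₀| := by simpa using abs_add_le (u - u₀) u₀
        _ ≤ 2 * r := by linarith
    have h3 : ‖G (y + u₁ • d) - G (y + u₂ • d)‖ ≤ K * ‖d‖ * dist u₁ u₂ := by
      rw [← dist_eq_norm]
      calc dist (G (y + u₁ • d)) (G (y + u₂ • d))
          ≤ K * dist (y + u₁ • d) (y + u₂ • d) := hK.dist_le_mul _ (hmem _ h₁) _ (hmem _ h₂)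
        _ = K * (‖(u₁ - u₂) • d‖) := by
            rw [dist_eq_norm]; congr 2; module
        _ = K * ‖d‖ * dist u₁ u₂ := by
            rw [norm_smul, Real.dist_eq, Real.norm_eq_abs]; ring
    calc dist (⟪d, G (y + u₁ • d)⟫_ℝ) (⟪d, G (y + u₂ • d)⟫_ℝ)
        = ‖⟪d, G (y + u₁ • d) - G (y + u₂ • d)⟫_ℝ‖ := by
          rw [Real.dist_eq, inner_sub_right]; rfl
      _ ≤ ‖d‖ * ‖G (y + u₁ • d) - G (y + u₂ • d)‖ := norm_inner_le_norm _ _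
      _ ≤ ‖d‖ * (K * ‖d‖ * dist u₁ u₂) := by gcongr
      _ ≤ (Real.nnabs ((K:ℝ) * ‖d‖ ^ 2) : ℝ) * dist u₁ u₂ := by
          rw [Real.coe_nnabs, abs_of_nonneg (by positivity)]
          exact le_of_eq (by ring)
  · haveI : IsFiniteMeasure (volume.restrict B) :=
      ⟨by rw [Measure.restrict_apply_univ]; exact measure_ball_lt_top⟩
    exact integrable_const _
  · filter_upwards [ae_restrict_of_ae haeT, ae_restrict_mem hBmeas] with y hy hyB
    have hd : DifferentiableAt ℝ G (y + u₀ • d) :=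
      hy (hgeo y hyB u₀ (by linarith [abs_nonneg u₀, hr, hu₀]))
    have hline : HasDerivAt (fun u : ℝ => y + u • d) d u₀ := by
      simpa using ((hasDerivAt_id u₀).smul_const d).const_add y
    have h1 : HasDerivAt (fun u : ℝ => G (y + u • d)) ((fderiv ℝ G (y + u₀ • d)) d) u₀ :=
      hd.hasFDerivAt.comp_hasDerivAt u₀ hline
    exact ((innerSL ℝ d).hasFDerivAt.comp_hasDerivAt u₀ h1)


lemma key_contra (F : E → ℝ) (hF : Differentiable ℝ F) (d xs : E) (K : ℝ≥0) (δ : ℝ) (hδ : 0 < δ)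
    (hK : LipschitzOnWith K (fun y => gradient F y) (Metric.ball xs δ))
    (hgrad0 : gradient F xs = 0) (hmin : IsLocalMin F xs) (ε : ℝ) (hε : 0 < ε)
    (hcon : ∀ y, dist y xs < δ → DifferentiableAt ℝ (fun y => gradient F y) y →
      ⟪d, fderiv ℝ (fun y => gradient F y) y d⟫_ℝ ≤ -ε) : False := by
  set G : E → E := fun y => gradient F y with hGdef
  set r : ℝ := δ / (4 * (‖d‖ + 1)) with hrdef
  have hr : 0 < r := by positivity
  have hrd : 2 * r * ‖d‖ ≤ δ / 2 := by
    have hq : r * (4 * (‖d‖ + 1)) = δ := div_mul_cancel₀ δ (by positivity)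
    nlinarith [mul_nonneg hr.le (norm_nonneg d), hr.le]
  have hgeo : ∀ ρ : ℝ, ρ ≤ δ / 4 → ∀ y ∈ Metric.ball xs ρ, ∀ u : ℝ, |u| ≤ 2 * r →
      y + u • d ∈ Metric.ball xs δ := by
    intro ρ hρle y hy u hu
    rw [Metric.mem_ball] at hy ⊢
    calc dist (y + u • d) xs ≤ dist (y + u • d) y + dist y xs := dist_triangle _ _ _
      _ < ‖u • d‖ + ρ := by rw [dist_eq_norm, add_sub_cancel_left]; linarith
      _ ≤ 2 * r * ‖d‖ + δ / 4 := by
          rw [norm_smul, Real.norm_eq_abs]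
          have := mul_le_mul_of_nonneg_right hu (norm_nonneg d)
          linarith
      _ < δ := by linarith
  -- key decrease estimate
  have hGτ : ∀ τ : ℝ, 0 < τ → τ ≤ r → ⟪d, G (xs + τ • d)⟫_ℝ ≤ -(ε * τ) / 2 := by
    intro τ hτ0 hτr
    set ρ : ℝ := min (δ / 4) (ε * τ / (4 * ((K : ℝ) * ‖d‖ + 1))) with hρdef
    have hρpos : 0 < ρ := lt_min (by positivity) (by positivity)
    have hρle : ρ ≤ δ / 4 := min_le_left _ _
    have hgeo' := hgeo ρ hρle
    set B := Metric.ball xs ρ with hBdef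
    have hBmeas : MeasurableSet B := measurableSet_ball
    set m : ℝ := (volume B).toReal with hmdef
    have hm : 0 < m :=
      ENNReal.toReal_pos (Metric.measure_ball_pos volume xs hρpos).ne' measure_ball_lt_top.ne
    set Ψ : ℝ → ℝ := fun u => ∫ y in B, ⟪d, G (y + u • d)⟫_ℝ with hΨdef
    set Ψ' : ℝ → ℝ := fun u => ∫ y in B, ⟪d, (fderiv ℝ G (y + u • d)) d⟫_ℝ with hΨ'def
    have hΨd : ∀ u₀ : ℝ, |u₀| ≤ r → HasDerivAt Ψ (Ψ' u₀) u₀ ∧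
        Integrable (fun y => ⟪d, (fderiv ℝ G (y + u₀ • d)) d⟫_ℝ) (volume.restrict B) :=
      fun u₀ hu₀ => psi_deriv G d xs K δ ρ r hr hK hgeo' u₀ hu₀
    haveI : IsFiniteMeasure (volume.restrict B) :=
      ⟨by rw [Measure.restrict_apply_univ]; exact measure_ball_lt_top⟩
    have hae : ∀ᵐ y : E, y ∈ Metric.ball xs δ → DifferentiableAt ℝ G y := by
      filter_upwards [hK.ae_differentiableWithinAt_of_mem] with y hy hmem
      exact (hy hmem).differentiableAt (Metric.isOpen_ball.mem_nhds hmem)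
    -- derivative bound
    have hΨ'le : ∀ u₀ : ℝ, |u₀| ≤ r → Ψ' u₀ ≤ -ε * m := by
      intro u₀ hu₀
      have haeT : ∀ᵐ y : E, y + u₀ • d ∈ Metric.ball xs δ →
          DifferentiableAt ℝ G (y + u₀ • d) :=
        (measurePreserving_add_right volume
          (u₀ • d)).quasiMeasurePreserving.tendsto_ae.eventually hae
      have h1 : Ψ' u₀ ≤ ∫ _ in B, (-ε) := by
        apply integral_mono_ae (hΨd u₀ hu₀).2 (integrable_const _)
        filter_upwards [ae_restrict_of_ae haeT, ae_restrict_mem hBmeas] with y hy hyB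
        have hmem : y + u₀ • d ∈ Metric.ball xs δ :=
          hgeo' y hyB u₀ (by linarith [abs_nonneg u₀])
        exact hcon _ (Metric.mem_ball.1 hmem) (hy hmem)
      calc Ψ' u₀ ≤ ∫ _ in B, (-ε) := h1
        _ = -ε * m := by rw [setIntegral_const]; rw [smul_eq_mul]; rw [hmdef, measureReal_def]; ring
    -- MVT for Ψ
    obtain ⟨c, hc, hslope⟩ := exists_hasDerivAt_eq_slope Ψ Ψ' hτ0
      (fun u hu => ((hΨd u (by rw [abs_of_nonneg hu.1]; linarith [hu.2])).1).continuousAt.continuousWithinAt)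
      (fun u hu => (hΨd u (by rw [abs_of_nonneg hu.1.le]; linarith [hu.2.le])).1)
    have hΨτ : Ψ τ - Ψ 0 ≤ -ε * m * τ := by
      have h2 : Ψ' c ≤ -ε * m := hΨ'le c (by rw [abs_of_nonneg hc.1.le]; linarith [hc.2.le])
      rw [sub_zero] at hslope
      have h3 : (Ψ τ - Ψ 0) / τ ≤ -ε * m := by rw [← hslope]; exact h2
      calc Ψ τ - Ψ 0 = ((Ψ τ - Ψ 0) / τ) * τ := by field_simp
        _ ≤ -ε * m * τ := mul_le_mul_of_nonneg_right h3 hτ0.le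
    -- upper / lower comparison with the value at xs
    have hxsmem : ∀ u : ℝ, |u| ≤ 2 * r → xs + u • d ∈ Metric.ball xs δ :=
      fun u hu => hgeo' xs (Metric.mem_ball_self hρpos) u hu
    have hτabs : |τ| ≤ 2 * r := by rw [abs_of_nonneg hτ0.le]; linarith
    have hptwise : ∀ y ∈ B, ∀ u : ℝ, |u| ≤ 2 * r →
        |⟪d, G (y + u • d)⟫_ℝ - ⟪d, G (xs + u • d)⟫_ℝ| ≤ (K : ℝ) * ρ * ‖d‖ := by
      intro y hy u hu
      have h4 : ‖G (y + u • d) - G (xs + u • d)‖ ≤ (K : ℝ) * ρ := by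
        have := hK.dist_le_mul _ (hgeo' y hy u hu) _ (hxsmem u hu)
        rw [dist_eq_norm] at this
        apply this.trans
        have : dist (y + u • d) (xs + u • d) = dist y xs := dist_add_right y xs (u • d)
        rw [this]
        exact mul_le_mul_of_nonneg_left (Metric.mem_ball.1 hy).le (K.coe_nonneg)
      calc |⟪d, G (y + u • d)⟫_ℝ - ⟪d, G (xs + u • d)⟫_ℝ|
          = ‖⟪d, G (y + u • d) - G (xs + u • d)⟫_ℝ‖ := by rw [inner_sub_right]; rfl
        _ ≤ ‖d‖ * ‖G (y + u • d) - G (xs + u • d)‖ := norm_inner_le_norm _ _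
        _ ≤ ‖d‖ * ((K : ℝ) * ρ) := by gcongr
        _ = (K : ℝ) * ρ * ‖d‖ := by ring
    have hup : (⟪d, G (xs + τ • d)⟫_ℝ - (K : ℝ) * ρ * ‖d‖) * m ≤ Ψ τ := by
      have h5 : (∫ _ in B, (⟪d, G (xs + τ • d)⟫_ℝ - (K : ℝ) * ρ * ‖d‖)) ≤ Ψ τ := by
        apply integral_mono_ae (integrable_const _)
          (phi_integrable G d xs K δ ρ r hr hK hgeo' τ hτabs)
        filter_upwards [ae_restrict_mem hBmeas] with y hy
        have := hptwise y hy τ hτabs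
        have := abs_le.1 this
        linarith [this.1]
      rw [setIntegral_const, smul_eq_mul, mul_comm] at h5
      exact h5
    have hlow : Ψ 0 ≤ (K : ℝ) * ρ * ‖d‖ * m := by
      have h6 : Ψ 0 ≤ ∫ _ in B, ((K : ℝ) * ρ * ‖d‖) := by
        apply integral_mono_ae (phi_integrable G d xs K δ ρ r hr hK hgeo' 0 (by
          simp; positivity)) (integrable_const _)
        filter_upwards [ae_restrict_mem hBmeas] with y hy
        have h7 := hptwise y hy 0 (by simp; positivity)
        have h8 : G (xs + (0:ℝ) • d) = 0 := by simp [hGdef, hgrad0]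
        rw [h8, inner_zero_right, sub_zero] at h7
        exact (abs_le.1 h7).2
      rwa [setIntegral_const, smul_eq_mul, mul_comm] at h6
    -- combine
    have hcomb : ⟪d, G (xs + τ • d)⟫_ℝ ≤ 2 * ((K : ℝ) * ρ * ‖d‖) - ε * τ :=
      arith1 _ _ _ _ m ε τ hm hup hlow hΨτ
    have hρ2 : ρ ≤ ε * τ / (4 * ((K : ℝ) * ‖d‖ + 1)) := min_le_right _ _
    have hKd : (0:ℝ) ≤ (K : ℝ) * ‖d‖ := by positivity
    have h10 : 2 * ((K : ℝ) * ‖d‖ * ρ) ≤ ε * τ / 2 :=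
      arith2 ((K : ℝ) * ‖d‖) ρ ε τ hKd hρpos.le hρ2
    linarith
  -- conclude: F strictly decreases along d near xs, contradicting local min
  obtain ⟨s, hs0, hsmin⟩ := Metric.eventually_nhds_iff.1 hmin
  set t₀ : ℝ := min r (s / (2 * (‖d‖ + 1))) with ht₀def
  have ht₀pos : 0 < t₀ := lt_min hr (by positivity)
  have ht₀r : t₀ ≤ r := min_le_left _ _
  have hg : ∀ x : ℝ, HasDerivAt (fun x : ℝ => F (xs + x • d)) (⟪d, G (xs + x • d)⟫_ℝ) x := by
    intro x
    have hline : HasDerivAt (fun u : ℝ => xs + u • d) d x := by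
      simpa using ((hasDerivAt_id x).smul_const d).const_add xs
    have h1 : HasDerivAt (fun u : ℝ => F (xs + u • d)) ((fderiv ℝ F (xs + x • d)) d) x :=
      (hF _).hasFDerivAt.comp_hasDerivAt x hline
    have h2 : (fderiv ℝ F (xs + x • d)) d = ⟪d, G (xs + x • d)⟫_ℝ := by
      rw [real_inner_comm]
      exact (InnerProductSpace.toDual_symm_apply).symm
    rwa [h2] at h1
  obtain ⟨c, hc, hslope⟩ := exists_hasDerivAt_eq_slope (fun x : ℝ => F (xs + x • d))
    (fun x => ⟪d, G (xs + x • d)⟫_ℝ) ht₀pos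
    (fun u _ => (hg u).continuousAt.continuousWithinAt) (fun u _ => hg u)
  have hneg : ⟪d, G (xs + c • d)⟫_ℝ ≤ -(ε * c) / 2 := hGτ c hc.1 (hc.2.le.trans ht₀r)
  have hlt : F (xs + t₀ • d) < F xs := by
    rw [sub_zero] at hslope
    have h12 : (F (xs + t₀ • d) - F (xs + (0:ℝ) • d)) / t₀ ≤ -(ε * c) / 2 := by
      rw [← hslope]; exact hneg
    have h13 : F (xs + (0:ℝ) • d) = F xs := by simp
    have h14 : F (xs + t₀ • d) - F xs ≤ (-(ε * c) / 2) * t₀ := by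
      have h15 := mul_le_mul_of_nonneg_right h12 ht₀pos.le
      rw [div_mul_cancel₀ _ ht₀pos.ne'] at h15
      rwa [h13] at h15
    nlinarith [mul_pos (mul_pos hε hc.1) ht₀pos]
  have hmem : dist (xs + t₀ • d) xs < s := by
    rw [dist_eq_norm, add_sub_cancel_left, norm_smul, Real.norm_eq_abs,
      abs_of_nonneg ht₀pos.le]
    have ht₀s : t₀ ≤ s / (2 * (‖d‖ + 1)) := min_le_right _ _
    have : t₀ * ‖d‖ ≤ s / (2 * (‖d‖ + 1)) * ‖d‖ :=
      mul_le_mul_of_nonneg_right ht₀s (norm_nonneg d)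
    apply this.trans_lt
    rw [div_mul_eq_mul_div, div_lt_iff₀ (by positivity)]
    nlinarith [norm_nonneg d, hs0]
  exact absurd (hsmin hmem) (not_le.2 hlt)


lemma key_claim (F : E → ℝ) (hF : Differentiable ℝ F)
    (hLip : LocallyLipschitz (fun y => gradient F y))
    (xs : E) (hmin : IsLocalMin F xs) (hgrad0 : gradient F xs = 0) (d : E) :
    ∀ ε > (0:ℝ), ∀ δ > (0:ℝ), ∃ y, dist y xs < δ ∧
      DifferentiableAt ℝ (fun y => gradient F y) y ∧
      -ε < ⟪d, fderiv ℝ (fun y => gradient F y) y d⟫_ℝ := by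
  intro ε hε δ hδ
  by_contra hcon
  push_neg at hcon
  obtain ⟨K, t, ht, hKt⟩ := hLip xs
  obtain ⟨δ₁, hδ₁, hball⟩ := Metric.mem_nhds_iff.1 ht
  set δ₂ : ℝ := min δ δ₁ with hδ₂def
  have hδ₂ : 0 < δ₂ := lt_min hδ hδ₁
  have hK : LipschitzOnWith K (fun y => gradient F y) (Metric.ball xs δ₂) :=
    hKt.mono ((Metric.ball_subset_ball (min_le_right _ _)).trans hball)
  exact key_contra F hF d xs K δ₂ hδ₂ hK hgrad0 hmin ε hε
    (fun y hy hdiff => hcon y (hy.trans_le (min_le_left _ _)) hdiff)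

end Aux

theorem stmt_1 {n : ℕ} (F : EuclideanSpace ℝ (Fin n) → ℝ)
    (hF : Differentiable ℝ F)
    (hLip : LocallyLipschitz (fun y => gradient F y))
    (xs : EuclideanSpace ℝ (Fin n)) (hmin : IsLocalMin F xs) :
    gradient F xs = 0 ∧
      ∀ d : EuclideanSpace ℝ (Fin n), ∃ M ∈ genHessian F xs, 0 ≤ ⟪d, M d⟫_ℝ := by
  have hgrad0 : gradient F xs = 0 := by
    unfold gradient
    rw [hmin.fderiv_eq_zero, map_zero]
  refine ⟨hgrad0, fun d => ?_⟩
  set G : EuclideanSpace ℝ (Fin n) → EuclideanSpace ℝ (Fin n) := fun y => gradient F y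
    with hGdef
  obtain ⟨K, t, ht, hKt⟩ := hLip xs
  obtain ⟨δ₁, hδ₁, hball⟩ := Metric.mem_nhds_iff.1 ht
  have hK : LipschitzOnWith K G (Metric.ball xs δ₁) := hKt.mono hball
  have hsel : ∀ k : ℕ, ∃ y, dist y xs < min δ₁ (1 / (k + 1)) ∧ DifferentiableAt ℝ G y ∧
      -(1 / (k + 1) : ℝ) < ⟪d, fderiv ℝ G y d⟫_ℝ := by
    intro k
    have h1 : (0:ℝ) < 1 / (k + 1) := by positivity
    exact key_claim F hF hLip xs hmin hgrad0 d (1 / (k + 1)) h1 (min δ₁ (1 / (k + 1)))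
      (lt_min hδ₁ h1)
  choose y hydist hydiff hyineq using hsel
  have hbound : ∀ k, fderiv ℝ G (y k) ∈ Metric.closedBall
      (0 : EuclideanSpace ℝ (Fin n) →L[ℝ] EuclideanSpace ℝ (Fin n)) K := by
    intro k
    rw [Metric.mem_closedBall, dist_zero_right]
    have hmem : Metric.ball xs δ₁ ∈ 𝓝 (y k) :=
      Metric.isOpen_ball.mem_nhds (Metric.mem_ball.2 ((hydist k).trans_le (min_le_left _ _)))
    exact norm_fderiv_le_of_lipschitzOn ℝ hmem hK
  have hcpt : IsCompact (Metric.closedBall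
      (0 : EuclideanSpace ℝ (Fin n) →L[ℝ] EuclideanSpace ℝ (Fin n)) K) :=
    isCompact_closedBall _ _
  obtain ⟨M, _, φ, hφ, hconv⟩ := hcpt.tendsto_subseq hbound
  have htends : Tendsto (fun k => y (φ k)) atTop (𝓝 xs) := by
    rw [tendsto_iff_dist_tendsto_zero]
    apply squeeze_zero (fun k => dist_nonneg) (fun k => ?_)
      tendsto_one_div_add_atTop_nhds_zero_nat
    have h2 : dist (y (φ k)) xs ≤ 1 / (φ k + 1) :=
      ((hydist (φ k)).trans_le (min_le_right _ _)).le
    apply h2.trans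
    have h6 : k ≤ φ k := hφ.le_apply
    have : (k : ℝ) + 1 ≤ (φ k : ℝ) + 1 := by exact_mod_cast by omega
    exact one_div_le_one_div_of_le (by positivity) this
  have hMB : M ∈ Bsub G xs := ⟨fun k => y (φ k), htends, fun k => hydiff (φ k), hconv⟩
  refine ⟨M, subset_convexHull ℝ _ hMB, ?_⟩
  have hinner : Tendsto (fun k => ⟪d, (fderiv ℝ G (y (φ k))) d⟫_ℝ) atTop (𝓝 ⟪d, M d⟫_ℝ) := by
    have hMd : Tendsto (fun k => (fderiv ℝ G (y (φ k))) d) atTop (𝓝 (M d)) := by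
      have hcont : Continuous fun A : EuclideanSpace ℝ (Fin n) →L[ℝ]
          EuclideanSpace ℝ (Fin n) => A d :=
        (ContinuousLinearMap.apply ℝ (EuclideanSpace ℝ (Fin n)) d).continuous
      exact (hcont.tendsto M).comp hconv
    exact Filter.Tendsto.inner tendsto_const_nhds hMd
  have hlim0 : Tendsto (fun k : ℕ => -(1 / (k + 1) : ℝ)) atTop (𝓝 0) := by
    rw [show (0:ℝ) = -0 by norm_num]
    exact tendsto_one_div_add_atTop_nhds_zero_nat.neg
  refine le_of_tendsto_of_tendsto' hlim0 hinner (fun k => ?_)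
  have h3 : -(1 / (φ k + 1) : ℝ) < ⟪d, (fderiv ℝ G (y (φ k))) d⟫_ℝ := hyineq (φ k)
  have h4 : (1 / (φ k + 1) : ℝ) ≤ 1 / (k + 1) := by
    apply one_div_le_one_div_of_le (by positivity)
    have h6 : k ≤ φ k := hφ.le_apply
    exact_mod_cast by omega
  linarith
end

section
/- Let x* be a feasible point of (NSOCP) and, for x ∈ ℝⁿ, define the perturbed critical subspace S(x,x*) = {d ∈ ℝⁿ : Dh(x)d = 0; Dg_i(x)d = 0 for all i ∈ I₀(x*); g̃_i(x)ᵀ Γ_i Dg_i(x)d = 0 for all i ∈ I_B(x*)}. Then the weak constant rank (WCR) property holds at x* — i.e. there is a neighborhood N of x* on which the dimension of the linear span of the family {∇h_i(x) : i = 1,…,p} ∪ {∇g_{ij}(x) : i ∈ I₀(x*), j = 1,…,m_i} ∪ {Dg_i(x)ᵀ Γ_i g̃_i(x) : i ∈ I_B(x*)} is the same for all x ∈ N — if and only if the set-valued map x ↦ S(x,x*) is inner semicontinuous at x*, meaning that for every d ∈ S(x*,x*) and every sequence xᵏ → x* there exist dᵏ → d with dᵏ ∈ S(xᵏ,x*)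 for all k. -/
/-!
STATEMENT 5: For NSOCP, the weak constant rank property at a feasible point x*
holds iff the perturbed critical subspace map x ↦ S(x, x*) is inner
semicontinuous at x*.
-/

open Filter Topology Set
open scoped InnerProductSpace
open Module Submodule Matrix

noncomputable def tailNorm {d : ℕ} (w : EuclideanSpace ℝ (Fin (d + 1))) : ℝ :=
  Real.sqrt (∑ j : Fin d, (w j.succ) ^ 2)

def Lorentz (d : ℕ) : Set (EuclideanSpace ℝ (Fin (d + 1))) := {w | tailNorm w ≤ w 0}

def LorentzBdPos (d : ℕ) : Set (EuclideanSpace ℝ (Fin (d + 1))) :=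
  {w | w ≠ 0 ∧ tailNorm w = w 0}

noncomputable def gammaApp {d : ℕ} (w : EuclideanSpace ℝ (Fin (d + 1))) :
    EuclideanSpace ℝ (Fin (d + 1)) :=
  WithLp.toLp 2 (fun j => if j = 0 then w j else -(w j))

noncomputable def tildeVec {d : ℕ} (w : EuclideanSpace ℝ (Fin (d + 1))) :
    EuclideanSpace ℝ (Fin (d + 1)) :=
  WithLp.toLp 2 (fun j => if j = 0 then tailNorm w else w j)

/-- The perturbed critical subspace `S(x, x*)` of (NSOCP). -/
def pertSubspace {n p r : ℕ} (msub : Fin r → ℕ)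
    (g : EuclideanSpace ℝ (Fin n) → PiLp 2 (fun i : Fin r => EuclideanSpace ℝ (Fin (msub i + 1))))
    (h : EuclideanSpace ℝ (Fin n) → EuclideanSpace ℝ (Fin p))
    (xs x : EuclideanSpace ℝ (Fin n)) : Set (EuclideanSpace ℝ (Fin n)) :=
  {d | fderiv ℝ h x d = 0 ∧
    (∀ i : Fin r, g xs i = 0 → fderiv ℝ (fun y => g y i) x d = 0) ∧
    (∀ i : Fin r, g xs i ∈ LorentzBdPos (msub i) →
      ⟪tildeVec (g x i), gammaApp (fderiv ℝ (fun y => g y i) x d)⟫_ℝ = 0)}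


theorem mem_orthoSpan_iff {E : Type*} [NormedAddCommGroup E] [InnerProductSpace ℝ E]
    (S : Set E) (d : E) : d ∈ (span ℝ S)ᗮ ↔ ∀ u ∈ S, ⟪u, d⟫_ℝ = 0 := by
  constructor
  · intro hd u hu
    exact hd u (subset_span hu)
  · intro hall
    rw [Submodule.mem_orthogonal]
    intro u hu
    induction hu using Submodule.span_induction with
    | mem w hw => exact hall w hw
    | zero => simp
    | add w₁ w₂ _ _ h1 h2 => rw [inner_add_left, h1, h2, add_zero]
    | smul c w _ hw => rw [inner_smul_left, hw, mul_zero]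

theorem key_iff {X : Type*} [MetricSpace X] {E : Type*} [NormedAddCommGroup E]
    [InnerProductSpace ℝ E] [FiniteDimensional ℝ E] {ι : Type*} [Fintype ι]
    (v : X → ι → E) (hv : ∀ j, Continuous fun x => v x j) (x₀ : X) :
    (∃ N ∈ 𝓝 x₀, ∃ c : ℕ, ∀ x ∈ N, finrank ℝ (span ℝ (Set.range (v x))) = c) ↔
    (∀ d : E, (∀ j, ⟪v x₀ j, d⟫_ℝ = 0) → ∀ xk : ℕ → X, Tendsto xk atTop (𝓝 x₀) →
      ∃ dk : ℕ → E, Tendsto dk atTop (𝓝 d) ∧ ∀ k, ∀ j, ⟪v (xk k) j, dk k⟫_ℝ = 0) := by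
  classical
  -- common setup
  obtain ⟨b, hbsub, hbspan, hbind⟩ := exists_linearIndependent ℝ (Set.range (v x₀))
  haveI : Fintype b := ((Set.finite_range (v x₀)).subset hbsub).fintype
  have hσ : ∀ e : b, ∃ j : ι, v x₀ j = (e : E) := fun e => hbsub e.2
  choose σ hσspec using hσ
  set u : X → b → E := fun x e => v x (σ e) with hu_def
  have hu₀ : u x₀ = (fun e : b => (e : E)) := funext fun e => hσspec e
  have hindep₀ : LinearIndependent ℝ (u x₀) := hu₀ ▸ hbind
  have hucont : Continuous fun x => u x := continuous_pi fun e => hv (σ e)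
  set O : Set X := (fun x => u x) ⁻¹' {f : b → E | LinearIndependent ℝ f} with hO_def
  have hO : IsOpen O := isOpen_setOf_linearIndependent.preimage hucont
  have hx₀O : x₀ ∈ O := hindep₀
  have hrange : ∀ x, Set.range (u x) ⊆ Set.range (v x) := by
    rintro x _ ⟨e, rfl⟩; exact ⟨σ e, rfl⟩
  have hcardW : finrank ℝ (span ℝ (Set.range (v x₀))) = Fintype.card b := by
    rw [← hbspan, finrank_span_set_eq_card hbind, Set.toFinset_card]
  have huspan : ∀ x ∈ O, finrank ℝ (span ℝ (Set.range (u x))) = Fintype.card b :=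
    fun x hx => finrank_span_eq_card hx
  have hge : ∀ x ∈ O, Fintype.card b ≤ finrank ℝ (span ℝ (Set.range (v x))) := by
    intro x hx
    rw [← huspan x hx]
    exact Submodule.finrank_mono (span_mono (hrange x))
  constructor
  · -- WCR → inner semicontinuity
    rintro ⟨N, hN, c, hc⟩ d hd xk hxk
    have hcx₀ : finrank ℝ (span ℝ (Set.range (v x₀))) = c := hc x₀ (mem_of_mem_nhds hN)
    have hspan_eq : ∀ x ∈ N ∩ O, span ℝ (Set.range (u x)) = span ℝ (Set.range (v x)) := by
      intro x hx
      refine Submodule.eq_of_le_of_finrank_le (span_mono (hrange x)) ?_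
      rw [hc x hx.1, huspan x hx.2, ← hcardW, hcx₀]
    -- Gram matrix machinery
    set G : X → Matrix b b ℝ := fun x => Matrix.of fun e f => ⟪u x e, u x f⟫_ℝ with hG_def
    have hGcont : Continuous G := by
      apply continuous_matrix
      intro e f
      exact (hv (σ e)).inner (hv (σ f))
    have hdet₀ : (G x₀).det ≠ 0 := by
      intro h0
      obtain ⟨y, hy0, hy⟩ := (Matrix.exists_mulVec_eq_zero_iff).2 h0
      have hiz : ⟪∑ e, y e • u x₀ e, ∑ f, y f • u x₀ f⟫_ℝ = 0 := by
        rw [sum_inner]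
        refine Finset.sum_eq_zero fun e _ => ?_
        rw [real_inner_smul_left, inner_sum]
        have : (G x₀ *ᵥ y) e = 0 := by rw [hy]; rfl
        rw [Matrix.mulVec, dotProduct] at this
        simp only [real_inner_smul_right]
        have h2 : ∑ f, y f * ⟪u x₀ e, u x₀ f⟫_ℝ = 0 := by
          rw [← this]
          exact Finset.sum_congr rfl fun f _ => by simp [hG_def, mul_comm]
        rw [h2, mul_zero]
      have hz : ∑ e, y e • u x₀ e = 0 := by
        exact (inner_self_eq_zero (𝕜 := ℝ)).1 hiz
      exact hy0 (funext fun e => (Fintype.linearIndependent_iff.1 hindep₀ y hz e))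
    set bv : X → b → ℝ := fun x e => ⟪u x e, d⟫_ℝ with hbv_def
    set al : X → b → ℝ := fun x => (G x).det⁻¹ • ((G x).adjugate *ᵥ bv x) with hal_def
    have hsolve : ∀ x, (G x).det ≠ 0 → G x *ᵥ al x = bv x := by
      intro x hdx
      simp only [hal_def]
      simp only [Matrix.mulVec_smul, Matrix.mulVec_mulVec, Matrix.mul_adjugate,
        Matrix.smul_mulVec, Matrix.one_mulVec, smul_smul,
        inv_mul_cancel₀ hdx, one_smul]
    set corr : X → E := fun x => ∑ e, al x e • u x e with hcorr_def
    have hperp : ∀ x, (G x).det ≠ 0 → ∀ e, ⟪u x e, d - corr x⟫_ℝ = 0 := by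
      intro x hdx e
      rw [inner_sub_right]
      simp only [hcorr_def]
      have : ⟪u x e, ∑ f, al x f • u x f⟫_ℝ = (G x *ᵥ al x) e := by
        rw [inner_sum, Matrix.mulVec, dotProduct]
        refine Finset.sum_congr rfl fun f _ => ?_
        rw [real_inner_smul_right]; simp [hG_def, mul_comm]
      rw [this, hsolve x hdx]
      simp [hbv_def]
    -- continuity of corr at x₀, and corr x₀ = 0
    have hbv₀ : bv x₀ = 0 := funext fun e => hd (σ e)
    have hal₀ : al x₀ = 0 := by simp [hal_def, hbv₀]
    have hcorr₀ : corr x₀ = 0 := by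
      simp [hcorr_def, hal₀]
    have hbvcont : Continuous fun x => bv x :=
      continuous_pi fun e => (hv (σ e)).inner continuous_const
    have halcont : ContinuousAt (fun x => al x) x₀ := by
      apply ContinuousAt.fun_smul
      · exact (hGcont.matrix_det.continuousAt).inv₀ hdet₀
      · apply Continuous.continuousAt
        apply continuous_pi
        intro e
        simp only [Matrix.mulVec, dotProduct]
        exact continuous_finset_sum _ fun f _ =>
          ((continuous_apply_apply e f).comp hGcont.matrix_adjugate).mul
            ((continuous_apply f).comp hbvcont)
    have hcorrcont : ContinuousAt corr x₀ := by
      simp only [hcorr_def]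
      exact tendsto_finset_sum _ fun e _ =>
        (((continuous_apply e).continuousAt.comp halcont).smul ((hv (σ e)).continuousAt))
    have hcorrlim : Tendsto (fun k => corr (xk k)) atTop (𝓝 0) := by
      rw [← hcorr₀]
      exact hcorrcont.tendsto.comp hxk
    -- eventually good
    have hEv : ∀ᶠ k in atTop, xk k ∈ N ∧ xk k ∈ O ∧ (G (xk k)).det ≠ 0 := by
      have h1 : ∀ᶠ k in atTop, xk k ∈ N := hxk.eventually_mem hN
      have h2 : ∀ᶠ k in atTop, xk k ∈ O := hxk.eventually_mem (hO.mem_nhds hx₀O)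
      have h3 : ∀ᶠ k in atTop, (G (xk k)).det ≠ 0 :=
        ((hGcont.matrix_det.continuousAt.tendsto).comp hxk).eventually_ne hdet₀
      filter_upwards [h1, h2, h3] with k ha hb hc
      exact ⟨ha, hb, hc⟩
    obtain ⟨K, hK⟩ := eventually_atTop.1 hEv
    refine ⟨fun k => if K ≤ k then d - corr (xk k) else 0, ?_, ?_⟩
    · have : Tendsto (fun k => d - corr (xk k)) atTop (𝓝 d) := by
        simpa using hcorrlim.const_sub d
      refine this.congr' ?_
      filter_upwards [eventually_ge_atTop K] with k hk
      simp [hk]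
    · intro k j
      by_cases hk : K ≤ k
      · simp only [hk, if_true]
        obtain ⟨hN', hO', hd'⟩ := hK k hk
        have hmem : d - corr (xk k) ∈ (span ℝ (Set.range (u (xk k))))ᗮ :=
          (mem_orthoSpan_iff _ _).2 (by rintro _ ⟨e, rfl⟩; exact hperp _ hd' e)
        rw [hspan_eq _ ⟨hN', hO'⟩] at hmem
        exact (mem_orthoSpan_iff _ _).1 hmem (v (xk k) j) ⟨j, rfl⟩
      · simp [hk]
  · -- inner semicontinuity → WCR
    intro hisc
    by_contra hno
    push_neg at hno
    -- produce a bad sequence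
    have hbad : ∀ k : ℕ, ∃ x, x ∈ Metric.ball x₀ (1 / (k + 1)) ∩ O ∧
        finrank ℝ (span ℝ (Set.range (v x))) ≠ Fintype.card b := by
      intro k
      obtain ⟨x, hx, hxne⟩ := hno (Metric.ball x₀ (1 / (k + 1)) ∩ O)
        (Filter.inter_mem (Metric.ball_mem_nhds x₀ (by positivity)) (hO.mem_nhds hx₀O))
        (Fintype.card b)
      exact ⟨x, hx, hxne⟩
    choose xk hxkmem hxkne using hbad
    have hxk : Tendsto xk atTop (𝓝 x₀) := by
      rw [tendsto_iff_dist_tendsto_zero]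
      apply squeeze_zero (fun k => dist_nonneg)
        (fun k => le_of_lt ?_) tendsto_one_div_add_atTop_nhds_zero_nat
      exact (hxkmem k).1
    have hgt : ∀ k, Fintype.card b < finrank ℝ (span ℝ (Set.range (v (xk k)))) :=
      fun k => lt_of_le_of_ne (hge _ (hxkmem k).2) (Ne.symm (hxkne k))
    -- basis of the orthogonal complement
    set W := span ℝ (Set.range (v x₀)) with hW_def
    set m := finrank ℝ (Wᗮ : Submodule ℝ E) with hm_def
    set bas := finBasis ℝ (Wᗮ : Submodule ℝ E) with hbas_def
    set dd : Fin m → E := fun t => ((bas t : Wᗮ) : E) with hdd_def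
    have hddind : LinearIndependent ℝ dd :=
      bas.linearIndependent.map' (Wᗮ).subtype (Submodule.ker_subtype _)
    have hddmem : ∀ t, dd t ∈ (Wᗮ : Submodule ℝ E) := fun t => (bas t).2
    have hddperp : ∀ t, ∀ j, ⟪v x₀ j, dd t⟫_ℝ = 0 := by
      intro t j
      exact (mem_orthoSpan_iff _ _).1 (hddmem t) (v x₀ j) ⟨j, rfl⟩
    have hchoice : ∀ t : Fin m, ∃ dk : ℕ → E, Tendsto dk atTop (𝓝 (dd t)) ∧
        ∀ k j, ⟪v (xk k) j, dk k⟫_ℝ = 0 := fun t => hisc (dd t) (hddperp t) xk hxk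
    choose dk hdktend hdkperp using hchoice
    -- the moving family converges to dd in the product topology
    have hFtend : Tendsto (fun k => fun t => dk t k) atTop (𝓝 dd) := by
      rw [tendsto_pi_nhds]
      exact fun t => hdktend t
    have hev : ∀ᶠ k in atTop, LinearIndependent ℝ (fun t => dk t k) :=
      hFtend.eventually hddind.eventually
    obtain ⟨k, hkind⟩ := hev.exists
    -- dimension count
    have hsub : span ℝ (Set.range (fun t => dk t k)) ≤ (span ℝ (Set.range (v (xk k))))ᗮ := by
      rw [span_le]
      rintro _ ⟨t, rfl⟩
      exact (mem_orthoSpan_iff _ _).2 (by rintro _ ⟨j, rfl⟩; exact hdkperp t k j)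
    have h1 : m ≤ finrank ℝ ((span ℝ (Set.range (v (xk k))))ᗮ : Submodule ℝ E) := by
      have := Submodule.finrank_mono hsub
      rwa [finrank_span_eq_card hkind, Fintype.card_fin] at this
    have h2 : finrank ℝ (span ℝ (Set.range (v (xk k)))) +
        finrank ℝ ((span ℝ (Set.range (v (xk k))))ᗮ : Submodule ℝ E) = finrank ℝ E :=
      Submodule.finrank_add_finrank_orthogonal _
    have h3 : finrank ℝ W + m = finrank ℝ E := Submodule.finrank_add_finrank_orthogonal _
    have h4 : finrank ℝ W = Fintype.card b := hcardW
    have h5 := hgt k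
    omega

section helpers

variable {E F G : Type*} [NormedAddCommGroup E] [InnerProductSpace ℝ E]
  [NormedAddCommGroup F] [InnerProductSpace ℝ F]
  [NormedAddCommGroup G] [InnerProductSpace ℝ G]

theorem fderiv_clm_comp' (π : F →L[ℝ] G) {f : E → F} {x : E}
    (hf : DifferentiableAt ℝ f x) :
    fderiv ℝ (fun y => π (f y)) x = π.comp (fderiv ℝ f x) := by
  have h := fderiv_comp x (π.differentiableAt (x := f x)) hf
  rw [ContinuousLinearMap.fderiv] at h
  simpa [Function.comp_def] using h

theorem inner_gradient [CompleteSpace E] (f : E → ℝ) (x d : E) :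
    ⟪gradient f x, d⟫_ℝ = fderiv ℝ f x d :=
  InnerProductSpace.toDual_symm_apply

end helpers

theorem euclid_eq_zero_iff {k : ℕ} (z : EuclideanSpace ℝ (Fin k)) :
    z = 0 ↔ ∀ i, z i = 0 :=
  ⟨fun h i => by rw [h]; rfl, fun h => PiLp.ext h⟩

theorem inner_gammaApp_right {k : ℕ} (w z : EuclideanSpace ℝ (Fin (k + 1))) :
    ⟪gammaApp w, z⟫_ℝ = ⟪w, gammaApp z⟫_ℝ := by
  simp only [PiLp.inner_apply, RCLike.inner_apply, conj_trivial]
  refine Finset.sum_congr rfl fun j _ => ?_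
  by_cases hj : j = 0 <;> simp [gammaApp, hj] <;> ring


theorem stmt_5 {n p r : ℕ} (msub : Fin r → ℕ)
    (f : EuclideanSpace ℝ (Fin n) → ℝ)
    (g : EuclideanSpace ℝ (Fin n) → PiLp 2 (fun i : Fin r => EuclideanSpace ℝ (Fin (msub i + 1))))
    (h : EuclideanSpace ℝ (Fin n) → EuclideanSpace ℝ (Fin p))
    (hf : ContDiff ℝ 2 f) (hg : ContDiff ℝ 2 g) (hh : ContDiff ℝ 2 h)
    (xs : EuclideanSpace ℝ (Fin n))
    -- `xs` is feasible for (NSOCP):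
    (hfeas : (∀ i, g xs i ∈ Lorentz (msub i)) ∧ h xs = 0) :
    -- WCR at `xs`:
    ((∃ N ∈ 𝓝 xs, ∃ c : ℕ, ∀ x ∈ N,
      Module.finrank ℝ (Submodule.span ℝ (Set.range
        (Sum.elim
          (fun i : Fin p => gradient (fun y => h y i) x)
          (Sum.elim
            (fun q : (i : {i : Fin r // g xs i = 0}) × Fin (msub i.1 + 1) =>
              gradient (fun y => g y q.1.1 q.2) x)
            (fun i : {i : Fin r // g xs i ∈ LorentzBdPos (msub i)} =>
              (fderiv ℝ (fun y => g y i.1) x).adjoint (gammaApp (tildeVec (g x i.1)))))))) = c)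
    ↔
    -- inner semicontinuity of `x ↦ S(x, x*)` at `xs`:
    (∀ d ∈ pertSubspace msub g h xs xs, ∀ xk : ℕ → EuclideanSpace ℝ (Fin n),
      Tendsto xk atTop (𝓝 xs) →
        ∃ dk : ℕ → EuclideanSpace ℝ (Fin n),
          Tendsto dk atTop (𝓝 d) ∧ ∀ k, dk k ∈ pertSubspace msub g h xs (xk k))) := by
  classical
  haveI : Fintype {i : Fin r // g xs i = 0} := Fintype.ofFinite _
  haveI : Fintype {i : Fin r // g xs i ∈ LorentzBdPos (msub i)} := Fintype.ofFinite _
  set v : EuclideanSpace ℝ (Fin n) →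
      (Fin p ⊕ ((i : {i : Fin r // g xs i = 0}) × Fin (msub i.1 + 1) ⊕
        {i : Fin r // g xs i ∈ LorentzBdPos (msub i)})) → EuclideanSpace ℝ (Fin n) :=
    fun x => Sum.elim
      (fun i : Fin p => gradient (fun y => h y i) x)
      (Sum.elim
        (fun q : (i : {i : Fin r // g xs i = 0}) × Fin (msub i.1 + 1) =>
          gradient (fun y => g y q.1.1 q.2) x)
        (fun i : {i : Fin r // g xs i ∈ LorentzBdPos (msub i)} =>
          (fderiv ℝ (fun y => g y i.1) x).adjoint (gammaApp (tildeVec (g x i.1))))) with hv_def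
  have hgi : ∀ i : Fin r, ContDiff ℝ 2 (fun y => g y i) := by
    intro i
    have := (PiLp.proj (𝕜 := ℝ) 2
      (fun i : Fin r => EuclideanSpace ℝ (Fin (msub i + 1))) i).contDiff.comp hg
    exact this
  have hgij : ∀ (i : Fin r) (j : Fin (msub i + 1)), ContDiff ℝ 2 (fun y => g y i j) := by
    intro i j
    have := (EuclideanSpace.proj (𝕜 := ℝ) j).contDiff.comp (hgi i)
    exact this
  have hhi : ∀ i : Fin p, ContDiff ℝ 2 (fun y => h y i) := by
    intro i
    have := (EuclideanSpace.proj (𝕜 := ℝ) i).contDiff.comp hh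
    exact this
  have hv : ∀ j, Continuous fun x => v x j := by
    rintro (i | q | ib)
    · simp only [hv_def, Sum.elim_inl]
      have hfd : Continuous fun x => fderiv ℝ (fun y => h y i) x :=
        (hhi i).continuous_fderiv (by norm_num)
      exact (InnerProductSpace.toDual ℝ _).symm.continuous.comp hfd
    · simp only [hv_def, Sum.elim_inr, Sum.elim_inl]
      have hfd : Continuous fun x => fderiv ℝ (fun y => g y q.1.1 q.2) x :=
        (hgij q.1.1 q.2).continuous_fderiv (by norm_num)
      exact (InnerProductSpace.toDual ℝ _).symm.continuous.comp hfd
    · simp only [hv_def, Sum.elim_inr]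
      have hA : Continuous fun x => fderiv ℝ (fun y => g y ib.1) x :=
        (hgi ib.1).continuous_fderiv (by norm_num)
      have hAdj : Continuous fun x =>
          ContinuousLinearMap.adjoint (fderiv ℝ (fun y => g y ib.1) x) :=
        (ContinuousLinearMap.adjoint :
          (EuclideanSpace ℝ (Fin n) →L[ℝ] EuclideanSpace ℝ (Fin (msub ib.1 + 1))) ≃ₗᵢ⋆[ℝ] _
          ).continuous.comp hA
      have hcomp : ∀ jj : Fin (msub ib.1 + 1), Continuous fun x => g x ib.1 jj :=
        fun jj => (hgij ib.1 jj).continuous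
      have htail : Continuous fun x => tailNorm (g x ib.1) := by
        have hsum : Continuous fun x => ∑ jj : Fin (msub ib.1), (g x ib.1 jj.succ) ^ 2 :=
          continuous_finset_sum _ fun jj _ => (hcomp jj.succ).pow 2
        exact Real.continuous_sqrt.comp hsum
      have hw : Continuous fun x => gammaApp (tildeVec (g x ib.1)) := by
        have hpi : Continuous fun (x : EuclideanSpace ℝ (Fin n)) =>
            (gammaApp (tildeVec (g x ib.1)) : Fin (msub ib.1 + 1) → ℝ) := by
          apply continuous_pi
          intro jj
          by_cases hj : jj = 0
          · subst hj
            simpa [gammaApp, tildeVec] using htail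
          · simp only [gammaApp, tildeVec, hj, if_false]; exact (hcomp jj).neg
        exact ((PiLp.continuousLinearEquiv 2 ℝ
          (fun _ : Fin (msub ib.1 + 1) => ℝ)).symm.continuous).comp hpi
      exact hAdj.clm_apply hw
  have hmem : ∀ x d, d ∈ pertSubspace msub g h xs x ↔ ∀ j, ⟪v x j, d⟫_ℝ = 0 := by
    intro x d
    have hdiffh : DifferentiableAt ℝ h x := (hh.differentiable (by norm_num)).differentiableAt
    have hdiffg : ∀ i : Fin r, DifferentiableAt ℝ (fun y => g y i) x :=
      fun i => ((hgi i).differentiable (by norm_num)).differentiableAt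
    have keyh : ∀ i : Fin p, ⟪gradient (fun y => h y i) x, d⟫_ℝ = fderiv ℝ h x d i := by
      intro i
      have h1 := fderiv_clm_comp' (EuclideanSpace.proj i) hdiffh
      have h2 : fderiv ℝ (fun y => h y i) x d = fderiv ℝ h x d i :=
        congrArg (fun L => L d) h1
      rw [inner_gradient, h2]
    have keyg : ∀ (i : Fin r) (jq : Fin (msub i + 1)),
        ⟪gradient (fun y => g y i jq) x, d⟫_ℝ = fderiv ℝ (fun y => g y i) x d jq := by
      intro i jq
      have h1 := fderiv_clm_comp' (EuclideanSpace.proj jq) (hdiffg i)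
      have h2 : fderiv ℝ (fun y => g y i jq) x d = fderiv ℝ (fun y => g y i) x d jq :=
        congrArg (fun L => L d) h1
      rw [inner_gradient, h2]
    have keyb : ∀ i : Fin r,
        ⟪ContinuousLinearMap.adjoint (fderiv ℝ (fun y => g y i) x)
            (gammaApp (tildeVec (g x i))), d⟫_ℝ =
          ⟪tildeVec (g x i), gammaApp (fderiv ℝ (fun y => g y i) x d)⟫_ℝ := by
      intro i
      rw [ContinuousLinearMap.adjoint_inner_left, inner_gammaApp_right]
    constructor
    · rintro ⟨ha, hb, hc⟩ (i | ⟨iq, jq⟩ | ib)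
      · simp only [hv_def, Sum.elim_inl]
        rw [keyh i, ha]
        rfl
      · simp only [hv_def, Sum.elim_inr, Sum.elim_inl]
        rw [keyg iq.1 jq, hb iq.1 iq.2]
        rfl
      · simp only [hv_def, Sum.elim_inr]
        rw [keyb ib.1]
        exact hc ib.1 ib.2
    · intro hall
      refine ⟨?_, ?_, ?_⟩
      · rw [euclid_eq_zero_iff]
        intro i
        have := hall (Sum.inl i)
        simp only [hv_def, Sum.elim_inl] at this
        rwa [keyh i] at this
      · intro i hi
        rw [euclid_eq_zero_iff]
        intro jq
        have := hall (Sum.inr (Sum.inl ⟨⟨i, hi⟩, jq⟩))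
        simp only [hv_def, Sum.elim_inr, Sum.elim_inl] at this
        rwa [keyg i jq] at this
      · intro i hi
        have := hall (Sum.inr (Sum.inr ⟨i, hi⟩))
        simp only [hv_def, Sum.elim_inr] at this
        rwa [keyb i] at this
  refine (key_iff v hv xs).trans ?_
  constructor
  · intro H d hd xk hxk
    obtain ⟨dk, h1, h2⟩ := H d ((hmem xs d).1 hd) xk hxk
    exact ⟨dk, h1, fun k => (hmem (xk k) (dk k)).2 (h2 k)⟩
  · intro H d hd xk hxk
    obtain ⟨dk, h1, h2⟩ := H d ((hmem xs d).2 hd) xk hxk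
    exact ⟨dk, h1, fun k => (hmem (xk k) (dk k)).1 (h2 k)⟩
end
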